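/- arXiv:1708.03032 — 2 statements merged into one kernel-verified Lean document; each statement's English description precedes it below -/
import Mathlib

section
/- Let UJ_n carry a G-grading in which, for every admissible i and for m = 0 and m = 1, the nonzero elements Y⁺_{i:m} and Y⁻_{i:m} are homogeneous and deg Y⁺_{i:m} ≠ deg Y⁻_{i:m} whenever both are nonzero. Then the grading is MT: for all admissible i and all m ≥ 0, the nonzero elements Y⁺_{i:m} and Y⁻_{i:m} are homogeneous with deg Y⁺_{i:m} ≠ deg Y⁻_{i:m} whenever both are nonzero. -/
open Matrix

/-- The submodule of upper triangular `n × n` matrices over `K`. -/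
def UTs (K : Type*) [Field K] (n : ℕ) : Submodule K (Matrix (Fin n) (Fin n) K) where
  carrier := {M | ∀ i j : Fin n, (j : ℕ) < (i : ℕ) → M i j = 0}
  add_mem' := by
    intro a b ha hb i j h
    simp [ha i j h, hb i j h]
  zero_mem' := by
    intro i j h
    simp
  smul_mem' := by
    intro c a ha i j h
    simp [ha i j h]

/-- `UJ K n` : the underlying space of the Jordan algebra of upper triangular matrices. -/
abbrev UJ (K : Type*) [Field K] (n : ℕ) : Type _ := ↥(UTs K n)

theorem mem_UTs {K : Type*} [Field K] {n : ℕ} {a : Matrix (Fin n) (Fin n) K} :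
    a ∈ UTs K n ↔ ∀ i j : Fin n, (j : ℕ) < (i : ℕ) → a i j = 0 := Iff.rfl

theorem UTs_mul_mem {K : Type*} [Field K] {n : ℕ} {a b : Matrix (Fin n) (Fin n) K}
    (ha : a ∈ UTs K n) (hb : b ∈ UTs K n) : a * b ∈ UTs K n := by
  rw [mem_UTs] at ha hb ⊢
  intro i j h
  rw [Matrix.mul_apply]
  apply Finset.sum_eq_zero
  intro k _
  rcases lt_or_ge (k : ℕ) (i : ℕ) with hk | hk
  · rw [ha i k hk, zero_mul]
  · rw [hb k j (lt_of_lt_of_le h hk), mul_zero]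

/-- The Jordan product `x ∘ y = xy + yx` on upper triangular matrices. -/
def jmul {K : Type*} [Field K] {n : ℕ} (x y : UJ K n) : UJ K n :=
  ⟨x.1 * y.1 + y.1 * x.1, (UTs K n).add_mem (UTs_mul_mem x.2 y.2) (UTs_mul_mem y.2 x.2)⟩

/-- The matrix unit `e_{ij}` (with `i ≤ j`) as an element of `UJ K n`. -/
def Eu (K : Type*) [Field K] {n : ℕ} (i j : Fin n) (h : i ≤ j) : UJ K n :=
  ⟨Matrix.single i j 1, by
    rw [mem_UTs]
    intro a b hab
    by_cases h1 : i = a ∧ j = b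
    · exfalso
      rcases h1 with ⟨rfl, rfl⟩
      exact absurd hab (not_lt.mpr h)
    · simp only [Matrix.single, Matrix.of_apply, if_neg h1]⟩

/-- `Y⁺_{i:m} = e_{i:m} + e_{−i:m}` (`0`-based index `i`, `i + m < n`). -/
def Yp (K : Type*) [Field K] {n : ℕ} (i m : ℕ) (h : i + m < n) : UJ K n :=
  Eu K ⟨i, by omega⟩ ⟨i + m, h⟩ (Fin.mk_le_mk.mpr (by omega)) +
  Eu K ⟨n - 1 - i - m, by omega⟩ ⟨n - 1 - i, by omega⟩ (Fin.mk_le_mk.mpr (by omega))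

/-- `Y⁻_{i:m} = e_{i:m} − e_{−i:m}` (`0`-based index `i`, `i + m < n`). -/
def Ym (K : Type*) [Field K] {n : ℕ} (i m : ℕ) (h : i + m < n) : UJ K n :=
  Eu K ⟨i, by omega⟩ ⟨i + m, h⟩ (Fin.mk_le_mk.mpr (by omega)) -
  Eu K ⟨n - 1 - i - m, by omega⟩ ⟨n - 1 - i, by omega⟩ (Fin.mk_le_mk.mpr (by omega))

/-- A `G`-grading on the Jordan algebra `UJ K n`: a direct sum decomposition into
`K`-subspaces `comp g` with `comp g ∘ comp h ⊆ comp (g * h)`. -/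
structure UJGrading (K : Type*) [Field K] (n : ℕ) (G : Type*) [Group G] where
  comp : G → Submodule K (UJ K n)
  indep : iSupIndep comp
  sup_top : (⨆ g, comp g) = ⊤
  jmul_mem : ∀ (g h : G) (x y : UJ K n), x ∈ comp g → y ∈ comp h → jmul x y ∈ comp (g * h)

/-- A graded isomorphism between two families of components: a bijective linear map
preserving the Jordan product and mapping each component onto the corresponding one. -/
def GradedIso {K : Type*} [Field K] {n : ℕ} {G : Type*} [Group G]
    (A A' : G → Submodule K (UJ K n)) : Prop :=
  ∃ ψ : UJ K n ≃ₗ[K] UJ K n,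
    (∀ x y, ψ (jmul x y) = jmul (ψ x) (ψ y)) ∧
    ∀ g, (A g).map (ψ : UJ K n →ₗ[K] UJ K n) = A' g

/-- A family of components is elementary if every matrix unit is homogeneous. -/
def IsElementaryFam {K : Type*} [Field K] {n : ℕ} {G : Type*} [Group G]
    (A : G → Submodule K (UJ K n)) : Prop :=
  ∀ (i j : Fin n) (h : i ≤ j), ∃ g, Eu K i j h ∈ A g

/-- A family of components is of mirror type (MT) if every nonzero `Y⁺_{i:m}`, `Y⁻_{i:m}`
is homogeneous, and their degrees differ whenever both are nonzero. -/
def IsMTFam {K : Type*} [Field K] {n : ℕ} {G : Type*} [Group G]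
    (A : G → Submodule K (UJ K n)) : Prop :=
  ∀ (i m : ℕ) (h : i + m < n),
    (Yp K i m h ≠ 0 → ∃ g, Yp K i m h ∈ A g) ∧
    (Ym K i m h ≠ 0 → ∃ g, Ym K i m h ∈ A g) ∧
    (Yp K i m h ≠ 0 → Ym K i m h ≠ 0 →
      ∀ g g' : G, Yp K i m h ∈ A g → Ym K i m h ∈ A g' → g ≠ g')

/-- The degree of the matrix unit `e_{ij}` in the elementary grading defined by `η`:
`g_i g_{i+1} ⋯ g_{j-1}`. -/
def elemDeg {n : ℕ} (G : Type*) [CommGroup G] (η : Fin (n - 1) → G) (i j : Fin n) : G :=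
  ∏ k ∈ (Finset.Ico (i : ℕ) (j : ℕ)).attach,
    η ⟨k.1, by have hk := Finset.mem_Ico.mp k.2; have hj := j.isLt; omega⟩

/-- The components of the elementary grading `(UJ_n, η)`. -/
def elemComp (K : Type*) [Field K] {n : ℕ} {G : Type*} [CommGroup G]
    (η : Fin (n - 1) → G) (g : G) : Submodule K (UJ K n) :=
  Submodule.span K {x : UJ K n | ∃ (i j : Fin n) (h : i ≤ j), elemDeg G η i j = g ∧ x = Eu K i j h}

/-- The degree of `Y⁺_{i:m}` in the MT grading determined by `η ∈ G^{⌈(n-1)/2⌉}`. -/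
def mtDeg {n : ℕ} (G : Type*) [CommGroup G] (η : Fin (n / 2) → G)
    (i m : ℕ) (h : i + m < n) : G :=
  ∏ k ∈ (Finset.range m).attach,
    η ⟨min (i + k.1) (n - 2 - (i + k.1)), by have hk := Finset.mem_range.mp k.2; omega⟩

/-- The components of the MT grading `(UJ_n, t, η)`:
`deg Y⁺_{i:m}` is `mtDeg η i m` and `deg Y⁻_{i:m} = t ⬝ mtDeg η i m`. -/
def mtComp (K : Type*) [Field K] {n : ℕ} {G : Type*} [CommGroup G]
    (t : G) (η : Fin (n / 2) → G) (g : G) : Submodule K (UJ K n) :=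
  Submodule.span K {x : UJ K n |
    (∃ (i m : ℕ) (h : i + m < n), mtDeg G η i m h = g ∧ x = Yp K i m h) ∨
    (∃ (i m : ℕ) (h : i + m < n), t * mtDeg G η i m h = g ∧ x = Ym K i m h)}

/-- The set `𝒯_m` of permutations that strictly decrease to the value `0` and then
strictly increase. -/
def TT (m : ℕ) : Set (Equiv.Perm (Fin m)) :=
  {σ | ∃ t : Fin m, (σ t : ℕ) = 0 ∧
    (∀ a b : Fin m, a < b → b ≤ t → σ b < σ a) ∧
    (∀ a b : Fin m, t ≤ a → a < b → σ a < σ b)}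

/-- The left-normed Jordan product of a list of elements (`0` for the empty list). -/
def jprod {K : Type*} [Field K] {n : ℕ} : List (UJ K n) → UJ K n
  | [] => 0
  | x :: xs => xs.foldl jmul x

/-- The `k`-th left-normed Jordan power `x ∘ x ∘ ⋯ ∘ x` (`k` factors, `0` for `k = 0`). -/
def jpow {K : Type*} [Field K] {n : ℕ} (x : UJ K n) : ℕ → UJ K n
  | 0 => 0
  | 1 => x
  | (k + 2) => jmul (jpow x (k + 1)) x

section Aux

variable {K : Type*} [Field K] {n : ℕ}

lemma stdmul (i j k l : Fin n) :
    (single i j (1:K)) * single k l 1 =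
      if j = k then single i l 1 else 0 := by
  split
  · next h => subst h; simp
  · next h => exact single_mul_single_of_ne 1 i j k h 1

/-- `E a b + s • E p q`. -/
def Yab (K : Type*) [Field K] {n : ℕ} (s : K) (a b p q : Fin n)
    (hab : a ≤ b) (hpq : p ≤ q) : UJ K n :=
  Eu K a b hab + s • Eu K p q hpq

lemma Yab_congr (s : K) {a b p q a' b' p' q' : Fin n} (h1 : a = a') (h2 : b = b')
    (h3 : p = p') (h4 : q = q') (hab : a ≤ b) (hpq : p ≤ q) (hab' : a' ≤ b') (hpq' : p' ≤ q') :
    Yab K s a b p q hab hpq = Yab K s a' b' p' q' hab' hpq' := by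
  subst h1; subst h2; subst h3; subst h4; rfl

lemma Yab_val (s : K) (a b p q : Fin n) (hab : a ≤ b) (hpq : p ≤ q) :
    ((Yab K s a b p q hab hpq : UJ K n) : Matrix (Fin n) (Fin n) K) =
      single a b 1 + s • single p q 1 := rfl

lemma jmul_val (x y : UJ K n) :
    ((jmul x y : UJ K n) : Matrix (Fin n) (Fin n) K) = x.1 * y.1 + y.1 * x.1 := rfl

lemma smul_val (c : K) (x : UJ K n) :
    ((c • x : UJ K n) : Matrix (Fin n) (Fin n) K) = c • (x : Matrix (Fin n) (Fin n) K) := rfl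

lemma masterA (s t : K) (a b c p q r : Fin n)
    (hab : a ≤ b) (hbc : b ≤ c) (hrp : r ≤ p) (hpq : p ≤ q) (hac : a ≤ c) (hrq : r ≤ q)
    (h1 : b ≠ r) (h2 : q ≠ b) (h3 : q ≠ r) (h4 : c ≠ a) (h5 : p ≠ a) (h6 : c ≠ p) :
    jmul (Yab K s a b p q hab hpq) (Yab K t b c r p hbc hrp) =
      Yab K (s*t) a c r q hac hrq := by
  apply Subtype.ext
  rw [jmul_val, Yab_val, Yab_val, Yab_val]
  simp only [mul_add, add_mul, smul_mul_assoc, mul_smul_comm, smul_smul, stdmul,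
    if_pos rfl, if_neg h1, if_neg h2, if_neg h3, if_neg h4, if_neg h5, if_neg h6,
    smul_zero, add_zero, zero_add, if_true]

lemma masterB (s t : K) (a b c p q r : Fin n)
    (hab : a ≤ b) (hbc : b ≤ c) (hrp : r ≤ p) (hpq : p ≤ q) (hac : a ≤ c) (hrq : r ≤ q)
    (hqb : q = b) (hpa : p = a) (h1 : b ≠ r) (h4 : c ≠ a) :
    jmul (Yab K s a b p q hab hpq) (Yab K t b c r p hbc hrp) =
      (1 + s) • Yab K t a c r q hac hrq := by
  have h3 : q ≠ r := hqb ▸ h1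
  have h6 : c ≠ p := hpa ▸ h4
  apply Subtype.ext
  rw [jmul_val, smul_val, Yab_val, Yab_val, Yab_val]
  subst hqb; subst hpa
  simp only [mul_add, add_mul, smul_mul_assoc, mul_smul_comm, smul_smul, stdmul,
    if_pos rfl, if_neg h1, if_neg h3, if_neg h4, if_neg h6,
    smul_zero, add_zero, zero_add, if_true, smul_add, add_smul, one_smul]
  module

lemma masterC (s t : K) (a b c p q r : Fin n)
    (hab : a ≤ b) (hbc : b ≤ c) (hrp : r ≤ p) (hpq : p ≤ q) (hac : a ≤ c) (hrq : r ≤ q)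
    (hbr : b = r) (hcp : c = p) (h2 : q ≠ b) (h5 : p ≠ a) :
    jmul (Yab K s a b p q hab hpq) (Yab K t b c r p hbc hrp) =
      (1 + t) • Yab K s a c r q hac hrq := by
  have h3 : q ≠ r := hbr ▸ h2
  have h4 : c ≠ a := hcp ▸ h5
  apply Subtype.ext
  rw [jmul_val, smul_val, Yab_val, Yab_val, Yab_val]
  subst hbr; subst hcp
  simp only [mul_add, add_mul, smul_mul_assoc, mul_smul_comm, smul_smul, stdmul,
    if_pos rfl, if_neg h2, if_neg h3, if_neg h4, if_neg h5,
    smul_zero, add_zero, zero_add, if_true, smul_add, add_smul, one_smul]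
  module

/-- sign-parametrized `Y`. -/
def Yg (K : Type*) [Field K] {n : ℕ} (s : K) (i m : ℕ) (h : i + m < n) : UJ K n :=
  Yab K s ⟨i, by omega⟩ ⟨i + m, h⟩ ⟨n - 1 - i - m, by omega⟩ ⟨n - 1 - i, by omega⟩
    (Fin.mk_le_mk.mpr (by omega)) (Fin.mk_le_mk.mpr (by omega))

lemma Yp_val (i m : ℕ) (h : i + m < n) :
    ((Yp K i m h : UJ K n) : Matrix (Fin n) (Fin n) K) =
      single ⟨i, by omega⟩ ⟨i + m, h⟩ 1 +
        single ⟨n - 1 - i - m, by omega⟩ ⟨n - 1 - i, by omega⟩ 1 := rfl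

lemma Ym_val (i m : ℕ) (h : i + m < n) :
    ((Ym K i m h : UJ K n) : Matrix (Fin n) (Fin n) K) =
      single ⟨i, by omega⟩ ⟨i + m, h⟩ 1 -
        single ⟨n - 1 - i - m, by omega⟩ ⟨n - 1 - i, by omega⟩ 1 := rfl

lemma Yg_one (i m : ℕ) (h : i + m < n) : Yg K 1 i m h = Yp K i m h := by
  apply Subtype.ext
  rw [Yg, Yab_val, Yp_val]
  module

lemma Yg_neg_one (i m : ℕ) (h : i + m < n) : Yg K (-1) i m h = Ym K i m h := by
  apply Subtype.ext
  rw [Yg, Yab_val, Ym_val]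
  module

lemma appA (s t : K) (i m : ℕ) (h : i + (m + 1) < n) (hB : 2*i + m ≠ n - 1)
    (hC : 2*(i + m) ≠ n - 2) (h1 : i + m < n) (h2 : (i + m) + 1 < n) :
    jmul (Yg K s i m h1) (Yg K t (i + m) 1 h2) = Yg K (s*t) i (m+1) h := by
  rw [show Yg K t (i+m) 1 h2 =
      Yab K t ⟨i + m, by omega⟩ ⟨i + m + 1, by omega⟩ ⟨n - 1 - i - (m+1), by omega⟩
        ⟨n - 1 - i - m, by omega⟩ (Fin.mk_le_mk.mpr (by omega)) (Fin.mk_le_mk.mpr (by omega))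
      from Yab_congr t rfl rfl (Fin.mk_eq_mk.mpr (by omega)) (Fin.mk_eq_mk.mpr (by omega)) _ _ _ _]
  exact masterA s t _ _ _ _ _ _ _ _ _ _ _ _
    (by simp only [ne_eq, Fin.mk.injEq]; omega) (by simp only [ne_eq, Fin.mk.injEq]; omega)
    (by simp only [ne_eq, Fin.mk.injEq]; omega) (by simp only [ne_eq, Fin.mk.injEq]; omega)
    (by simp only [ne_eq, Fin.mk.injEq]; omega) (by simp only [ne_eq, Fin.mk.injEq]; omega)

lemma appB (s t : K) (i m : ℕ) (h : i + (m + 1) < n) (hB : 2*i + m = n - 1)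
    (h1 : i + m < n) (h2 : (i + m) + 1 < n) :
    jmul (Yg K s i m h1) (Yg K t (i + m) 1 h2) = (1 + s) • Yg K t i (m+1) h := by
  rw [show Yg K t (i+m) 1 h2 =
      Yab K t ⟨i + m, by omega⟩ ⟨i + m + 1, by omega⟩ ⟨n - 1 - i - (m+1), by omega⟩
        ⟨n - 1 - i - m, by omega⟩ (Fin.mk_le_mk.mpr (by omega)) (Fin.mk_le_mk.mpr (by omega))
      from Yab_congr t rfl rfl (Fin.mk_eq_mk.mpr (by omega)) (Fin.mk_eq_mk.mpr (by omega)) _ _ _ _]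
  exact masterB s t _ _ _ _ _ _ _ _ _ _ _ _
    (Fin.mk_eq_mk.mpr (by omega)) (Fin.mk_eq_mk.mpr (by omega))
    (by simp only [ne_eq, Fin.mk.injEq]; omega) (by simp only [ne_eq, Fin.mk.injEq]; omega)

lemma appC (s t : K) (i m : ℕ) (h : i + (m + 1) < n) (hC : 2*(i + m) = n - 2)
    (h1 : i + m < n) (h2 : (i + m) + 1 < n) :
    jmul (Yg K s i m h1) (Yg K t (i + m) 1 h2) = (1 + t) • Yg K s i (m+1) h := by
  rw [show Yg K t (i+m) 1 h2 =
      Yab K t ⟨i + m, by omega⟩ ⟨i + m + 1, by omega⟩ ⟨n - 1 - i - (m+1), by omega⟩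
        ⟨n - 1 - i - m, by omega⟩ (Fin.mk_le_mk.mpr (by omega)) (Fin.mk_le_mk.mpr (by omega))
      from Yab_congr t rfl rfl (Fin.mk_eq_mk.mpr (by omega)) (Fin.mk_eq_mk.mpr (by omega)) _ _ _ _]
  exact masterC s t _ _ _ _ _ _ _ _ _ _ _ _
    (Fin.mk_eq_mk.mpr (by omega)) (Fin.mk_eq_mk.mpr (by omega))
    (by simp only [ne_eq, Fin.mk.injEq]; omega) (by simp only [ne_eq, Fin.mk.injEq]; omega)

lemma Yp_ne_zero (h2 : (2:K) ≠ 0) (i m : ℕ) (h : i + m < n) : Yp K i m h ≠ 0 := by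
  intro h0
  have h0' : ((Yp K i m h : UJ K n) : Matrix (Fin n) (Fin n) K) ⟨i, by omega⟩ ⟨i + m, h⟩
      = 0 := by rw [h0]; rfl
  rw [Yp_val, Matrix.add_apply, single_apply_same] at h0'
  by_cases hc : ((⟨n - 1 - i - m, by omega⟩ : Fin n) = ⟨i, by omega⟩ ∧
      (⟨n - 1 - i, by omega⟩ : Fin n) = ⟨i + m, h⟩)
  · rw [hc.1, hc.2, single_apply_same, one_add_one_eq_two] at h0'
    exact h2 h0'
  · rw [single_apply_of_ne _ _ _ _ _ hc, add_zero] at h0'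
    exact one_ne_zero h0'

lemma Ym_ne_zero (i m : ℕ) (h : i + m < n) (hB : 2*i + m ≠ n - 1) : Ym K i m h ≠ 0 := by
  intro h0
  have h0' : ((Ym K i m h : UJ K n) : Matrix (Fin n) (Fin n) K) ⟨i, by omega⟩ ⟨i + m, h⟩
      = 0 := by rw [h0]; rfl
  rw [Ym_val, Matrix.sub_apply, single_apply_same,
    single_apply_of_ne _ _ _ _ _ (by simp only [Fin.mk.injEq, not_and]; omega), sub_zero] at h0'
  exact one_ne_zero h0'

lemma Ym_eq_zero (i m : ℕ) (h : i + m < n) (hB : 2*i + m = n - 1) : Ym K i m h = 0 := by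
  apply Subtype.ext
  rw [Ym_val,
    show (⟨i, by omega⟩ : Fin n) = ⟨n - 1 - i - m, by omega⟩ from Fin.mk_eq_mk.mpr (by omega),
    show (⟨i + m, h⟩ : Fin n) = ⟨n - 1 - i, by omega⟩ from Fin.mk_eq_mk.mpr (by omega),
    sub_self]
  rfl

lemma indep_unique {G : Type*} [Group G] (A : UJGrading K n G) {x : UJ K n} (hx : x ≠ 0)
    {g g' : G} (h1 : x ∈ A.comp g) (h2 : x ∈ A.comp g') : g = g' := by
  by_contra hne
  have hd := A.indep.pairwiseDisjoint hne
  exact hx ((Submodule.disjoint_def.mp hd) x h1 h2)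

lemma mem_of_two_smul (h2 : (2:K) ≠ 0) {M : Submodule K (UJ K n)} {y : UJ K n}
    (h : (2:K) • y ∈ M) : y ∈ M := by
  have := M.smul_mem (2:K)⁻¹ h
  rwa [smul_smul, inv_mul_cancel₀ h2, one_smul] at this

end Aux

section Key

variable {K : Type*} [Field K] {n : ℕ}

lemma key_induction {G : Type*} [Group G] (h2 : (2 : K) ≠ 0) (A : UJGrading K n G)
    (h01 : ∀ (i m : ℕ) (h : i + m < n), m ≤ 1 →
      (Yp K i m h ≠ 0 → ∃ g, Yp K i m h ∈ A.comp g) ∧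
      (Ym K i m h ≠ 0 → ∃ g, Ym K i m h ∈ A.comp g) ∧
      (Yp K i m h ≠ 0 → Ym K i m h ≠ 0 →
        ∀ g g' : G, Yp K i m h ∈ A.comp g → Ym K i m h ∈ A.comp g' → g ≠ g')) :
    ∀ (m i : ℕ) (h : i + m < n), ∃ g, Yp K i m h ∈ A.comp g ∧
      (2*i + m ≠ n - 1 → ∃ g', Ym K i m h ∈ A.comp g' ∧ g ≠ g') := by
  intro m
  induction m with
  | zero =>
    intro i h
    obtain ⟨b1, b2, b3⟩ := h01 i 0 h (by omega)
    obtain ⟨g, hg⟩ := b1 (Yp_ne_zero h2 i 0 h)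
    refine ⟨g, hg, fun hB => ?_⟩
    have hm0 := Ym_ne_zero (K := K) i 0 h hB
    obtain ⟨g', hg'⟩ := b2 hm0
    exact ⟨g', hg', b3 (Yp_ne_zero h2 i 0 h) hm0 g g' hg hg'⟩
  | succ m ih =>
    intro i h
    have h1 : i + m < n := by omega
    have hb : (i + m) + 1 < n := by omega
    obtain ⟨g, hgp, hgcond⟩ := ih i h1
    obtain ⟨c1, c2, c3⟩ := h01 (i + m) 1 hb le_rfl
    obtain ⟨gb, hgb⟩ := c1 (Yp_ne_zero h2 _ _ _)
    by_cases hC : 2*(i + m) = n - 2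
    · have hBm : 2*i + m ≠ n - 1 := by omega
      obtain ⟨g', hgm, hgne⟩ := hgcond hBm
      refine ⟨g * gb, ?_, fun _ => ?_⟩
      · have hmem := A.jmul_mem g gb _ _ hgp hgb
        rw [← Yg_one i m h1, ← Yg_one (i + m) 1 hb, appC 1 1 i m h hC h1 hb] at hmem
        rw [← Yg_one i (m + 1) h]
        exact mem_of_two_smul h2 (by rwa [one_add_one_eq_two] at hmem)
      · refine ⟨g' * gb, ?_, fun he => hgne (mul_right_cancel he)⟩
        have hmem := A.jmul_mem g' gb _ _ hgm hgb
        rw [← Yg_neg_one i m h1, ← Yg_one (i + m) 1 hb, appC (-1) 1 i m h hC h1 hb] at hmem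
        rw [← Yg_neg_one i (m + 1) h]
        exact mem_of_two_smul h2 (by rwa [one_add_one_eq_two] at hmem)
    · have hYmb : Ym K (i + m) 1 hb ≠ 0 := Ym_ne_zero _ _ _ (by omega)
      obtain ⟨gb', hgb'⟩ := c2 hYmb
      have hbne : gb ≠ gb' := c3 (Yp_ne_zero h2 _ _ _) hYmb gb gb' hgb hgb'
      by_cases hB : 2*i + m = n - 1
      · refine ⟨g * gb, ?_, fun _ => ?_⟩
        · have hmem := A.jmul_mem g gb _ _ hgp hgb
          rw [← Yg_one i m h1, ← Yg_one (i + m) 1 hb, appB 1 1 i m h hB h1 hb] at hmem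
          rw [← Yg_one i (m + 1) h]
          exact mem_of_two_smul h2 (by rwa [one_add_one_eq_two] at hmem)
        · refine ⟨g * gb', ?_, fun he => hbne (mul_left_cancel he)⟩
          have hmem := A.jmul_mem g gb' _ _ hgp hgb'
          rw [← Yg_one i m h1, ← Yg_neg_one (i + m) 1 hb, appB 1 (-1) i m h hB h1 hb] at hmem
          rw [← Yg_neg_one i (m + 1) h]
          exact mem_of_two_smul h2 (by rwa [one_add_one_eq_two] at hmem)
      · refine ⟨g * gb, ?_, fun _ => ?_⟩
        · have hmem := A.jmul_mem g gb _ _ hgp hgb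
          rwa [← Yg_one i m h1, ← Yg_one (i + m) 1 hb, appA 1 1 i m h hB hC h1 hb,
            one_mul, Yg_one] at hmem
        · refine ⟨g * gb', ?_, fun he => hbne (mul_left_cancel he)⟩
          have hmem := A.jmul_mem g gb' _ _ hgp hgb'
          rwa [← Yg_one i m h1, ← Yg_neg_one (i + m) 1 hb, appA 1 (-1) i m h hB hC h1 hb,
            one_mul, Yg_neg_one] at hmem

end Key

/-- If the elements `Y⁺_{i:m}`, `Y⁻_{i:m}` for `m = 0, 1` are homogeneous with
`deg Y⁺ ≠ deg Y⁻` where applicable, then the grading is MT. -/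
theorem statement_14 {K : Type*} [Field K] (h2 : (2 : K) ≠ 0)
    {n : ℕ} (hn : 2 ≤ n) {G : Type*} [Group G]
    (A : UJGrading K n G)
    (h01 : ∀ (i m : ℕ) (h : i + m < n), m ≤ 1 →
      (Yp K i m h ≠ 0 → ∃ g, Yp K i m h ∈ A.comp g) ∧
      (Ym K i m h ≠ 0 → ∃ g, Ym K i m h ∈ A.comp g) ∧
      (Yp K i m h ≠ 0 → Ym K i m h ≠ 0 →
        ∀ g g' : G, Yp K i m h ∈ A.comp g → Ym K i m h ∈ A.comp g' → g ≠ g')) :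
    IsMTFam A.comp := by
  intro i m h
  obtain ⟨g, hgp, hcond⟩ := key_induction h2 A h01 m i h
  refine ⟨fun _ => ⟨g, hgp⟩, ?_, ?_⟩
  · intro hm
    have hB : 2*i + m ≠ n - 1 := fun he => hm (Ym_eq_zero i m h he)
    obtain ⟨g', hg', _⟩ := hcond hB
    exact ⟨g', hg'⟩
  · intro hp hm gg gg' hgg hgg'
    have hB : 2*i + m ≠ n - 1 := fun he => hm (Ym_eq_zero i m h he)
    obtain ⟨g', hg', hne⟩ := hcond hB
    rw [indep_unique A hp hgg hgp, indep_unique A hm hgg' hg']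
    exact hne
end

section
/- Let K be a field of characteristic different from 2, G an abelian group, q = ⌈(n−1)/2⌉, η, η' ∈ G^q, and let t_1, t_2 ∈ G be elements of order 2 with t_1 ≠ t_2. Then the MT gradings (UJ_n, t_1, η) and (UJ_n, t_2, η') are not graded-isomorphic. -/
open Matrix

section Aux

lemma strict_mul' {K : Type*} [Field K] {n k : ℕ} {A B : Matrix (Fin n) (Fin n) K}
    (hA : ∀ i j : Fin n, (j:ℕ) < (i:ℕ) + k → A i j = 0)
    (hB : ∀ i j : Fin n, (j:ℕ) ≤ (i:ℕ) → B i j = 0) :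
    ∀ i j : Fin n, (j:ℕ) < (i:ℕ) + k + 1 → (A*B) i j = 0 := by
  intro i j h
  rw [Matrix.mul_apply]
  apply Finset.sum_eq_zero
  intro l _
  rcases lt_or_ge (l:ℕ) ((i:ℕ)+k) with hl | hl
  · rw [hA i l hl, zero_mul]
  · rw [hB l j (by omega), mul_zero]

lemma idem_strict_zero {K : Type*} [Field K] {n : ℕ} {P : Matrix (Fin n) (Fin n) K}
    (hP : P * P = P) (hs : ∀ i j : Fin n, (j:ℕ) ≤ (i:ℕ) → P i j = 0) : P = 0 := by
  have key : ∀ m : ℕ, ∀ i j : Fin n, (j:ℕ) < (i:ℕ) + (m+1) → P i j = 0 := by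
    intro m
    induction m with
    | zero => intro i j h; exact hs i j (by omega)
    | succ m ih =>
      intro i j h
      rw [← hP]
      exact strict_mul' ih hs i j (by omega)
  ext i j
  exact key n i j (by omega)

lemma diag_sq {K : Type*} [Field K] {n : ℕ} {p q : Fin n} (hpq : p ≠ q) :
    (Matrix.single p p (1:K) - Matrix.single q q 1) *
      (Matrix.single p p (1:K) - Matrix.single q q 1) =
    Matrix.single p p 1 + Matrix.single q q 1 := by
  rw [Matrix.sub_mul, Matrix.mul_sub, Matrix.mul_sub]
  rw [Matrix.single_mul_single_same, Matrix.single_mul_single_same,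
      Matrix.single_mul_single_of_ne 1 p p q hpq 1, Matrix.single_mul_single_of_ne 1 q q p hpq.symm 1]
  rw [mul_one]
  abel

lemma diag_sq2 {K : Type*} [Field K] {n : ℕ} {p q : Fin n} (hpq : p ≠ q) :
    (Matrix.single p p (1:K) + Matrix.single q q 1) *
      (Matrix.single p p (1:K) + Matrix.single q q 1) =
    Matrix.single p p 1 + Matrix.single q q 1 := by
  rw [Matrix.add_mul, Matrix.mul_add, Matrix.mul_add]
  rw [Matrix.single_mul_single_same, Matrix.single_mul_single_same,
      Matrix.single_mul_single_of_ne 1 p p q hpq 1, Matrix.single_mul_single_of_ne 1 q q p hpq.symm 1]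
  rw [mul_one]
  abel

/-- The submodule of strictly upper triangular elements of `UJ K n`. -/
def strictSub (K : Type*) [Field K] (n : ℕ) : Submodule K (UJ K n) where
  carrier := {x | ∀ i j : Fin n, (j:ℕ) ≤ (i:ℕ) → x.1 i j = 0}
  add_mem' := by
    intro a b ha hb i j h
    have : ((a + b : UJ K n) : Matrix (Fin n) (Fin n) K) i j = a.1 i j + b.1 i j := rfl
    rw [this, ha i j h, hb i j h, add_zero]
  zero_mem' := by intro i j h; rfl
  smul_mem' := by
    intro c a ha i j h
    have : ((c • a : UJ K n) : Matrix (Fin n) (Fin n) K) i j = c * a.1 i j := rfl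
    rw [this, ha i j h, mul_zero]

lemma mem_strictSub {K : Type*} [Field K] {n : ℕ} {x : UJ K n} :
    x ∈ strictSub K n ↔ ∀ i j : Fin n, (j:ℕ) ≤ (i:ℕ) → x.1 i j = 0 := Iff.rfl

lemma Eu_strict {K : Type*} [Field K] {n : ℕ} {a b : Fin n} (hab : a ≤ b)
    (hlt : (a:ℕ) < (b:ℕ)) (i j : Fin n) (hji : (j:ℕ) ≤ (i:ℕ)) :
    (Eu K a b hab).1 i j = 0 := by
  show (if a = i ∧ b = j then (1:K) else 0) = 0
  rw [if_neg]
  rintro ⟨rfl, rfl⟩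
  omega

lemma mtDeg_zero {n : ℕ} (G : Type*) [CommGroup G] (η : Fin (n / 2) → G)
    (i : ℕ) (h : i + 0 < n) : mtDeg G η i 0 h = 1 := by
  simp [mtDeg]

lemma mtComp_le_strict {K : Type*} [Field K] {n : ℕ} {G : Type*} [CommGroup G]
    (t : G) (η : Fin (n / 2) → G) {g : G} (hg1 : g ≠ 1) (hgt : g ≠ t) :
    mtComp K t η g ≤ strictSub K n := by
  rw [mtComp, Submodule.span_le]
  rintro x (⟨i, m, h, hdeg, rfl⟩ | ⟨i, m, h, hdeg, rfl⟩)
  · cases m with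
    | zero => exact absurd ((mtDeg_zero G η i h).symm.trans hdeg).symm hg1
    | succ m' =>
      rw [SetLike.mem_coe, mem_strictSub]
      intro a b hba
      show (Eu K _ _ _).1 a b + (Eu K _ _ _).1 a b = 0
      rw [Eu_strict _ (by show i < i + (m'+1); omega) a b hba,
          Eu_strict _ (by show n-1-i-(m'+1) < n-1-i; omega) a b hba, add_zero]
  · cases m with
    | zero =>
      exfalso
      apply hgt
      rw [← hdeg, mtDeg_zero G η i h, mul_one]
    | succ m' =>
      rw [SetLike.mem_coe, mem_strictSub]
      intro a b hba
      show (Eu K _ _ _).1 a b - (Eu K _ _ _).1 a b = 0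
      rw [Eu_strict _ (by show i < i + (m'+1); omega) a b hba,
          Eu_strict _ (by show n-1-i-(m'+1) < n-1-i; omega) a b hba, sub_zero]

end Aux

/-- MT gradings with distinct order-two elements `t₁ ≠ t₂` are not graded-isomorphic. -/
theorem statement_15 {K : Type*} [Field K] (h2 : (2 : K) ≠ 0)
    {n : ℕ} (hn : 2 ≤ n) {G : Type*} [CommGroup G]
    (t₁ t₂ : G) (ht₁ : orderOf t₁ = 2) (ht₂ : orderOf t₂ = 2) (hne : t₁ ≠ t₂)
    (η η' : Fin (n / 2) → G) :
    ¬ GradedIso (mtComp K t₁ η) (mtComp K t₂ η') := by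
  rintro ⟨ψ, hmul, hcomp⟩
  have h00 : 0 + 0 < n := by omega
  have h0 : 0 < n := by omega
  have hn1 : n - 1 < n := by omega
  set p : Fin n := ⟨0, h0⟩ with hp
  set q : Fin n := ⟨n - 1, hn1⟩ with hq
  have hpq : p ≠ q := Fin.ne_of_val_ne (by show (0:ℕ) ≠ n - 1; omega)
  have hz1 : (Ym K 0 0 h00).1 = Matrix.single p p 1 - Matrix.single q q 1 := rfl
  have hu1 : (Yp K 0 0 h00).1 = Matrix.single p p 1 + Matrix.single q q 1 := rfl
  have hz : Ym K 0 0 h00 ∈ mtComp K t₁ η t₁ :=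
    Submodule.subset_span (Or.inr ⟨0, 0, h00, by rw [mtDeg_zero, mul_one], rfl⟩)
  have hψz : ψ (Ym K 0 0 h00) ∈ mtComp K t₂ η' t₁ := by
    rw [← hcomp t₁]
    exact Submodule.mem_map.mpr ⟨_, hz, rfl⟩
  have ht1ne1 : t₁ ≠ 1 := by
    intro h; rw [h, orderOf_one] at ht₁; omega
  have hMs : ∀ i j : Fin n, (j:ℕ) ≤ (i:ℕ) → (ψ (Ym K 0 0 h00)).1 i j = 0 :=
    mem_strictSub.mp (mtComp_le_strict t₂ η' ht1ne1 hne hψz)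
  have hzz : jmul (Ym K 0 0 h00) (Ym K 0 0 h00) = (2:K) • Yp K 0 0 h00 := by
    apply Subtype.ext
    show (Ym K 0 0 h00).1 * (Ym K 0 0 h00).1 + (Ym K 0 0 h00).1 * (Ym K 0 0 h00).1
        = (2:K) • (Yp K 0 0 h00).1
    rw [hz1, hu1, diag_sq hpq, two_smul]
  have huu : jmul (Yp K 0 0 h00) (Yp K 0 0 h00) = (2:K) • Yp K 0 0 h00 := by
    apply Subtype.ext
    show (Yp K 0 0 h00).1 * (Yp K 0 0 h00).1 + (Yp K 0 0 h00).1 * (Yp K 0 0 h00).1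
        = (2:K) • (Yp K 0 0 h00).1
    rw [hu1, diag_sq2 hpq, two_smul]
  have e1 : (2:K) • ψ (Yp K 0 0 h00) = jmul (ψ (Ym K 0 0 h00)) (ψ (Ym K 0 0 h00)) := by
    rw [← _root_.map_smul, ← hzz, hmul]
  have e2 : (2:K) • ψ (Yp K 0 0 h00) = jmul (ψ (Yp K 0 0 h00)) (ψ (Yp K 0 0 h00)) := by
    rw [← _root_.map_smul, ← huu, hmul]
  have e1' : (2:K) • (ψ (Yp K 0 0 h00)).1
      = (jmul (ψ (Ym K 0 0 h00)) (ψ (Ym K 0 0 h00))).1 := congrArg Subtype.val e1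
  have e2' : (2:K) • (ψ (Yp K 0 0 h00)).1
      = (jmul (ψ (Yp K 0 0 h00)) (ψ (Yp K 0 0 h00))).1 := congrArg Subtype.val e2
  have hPM : (ψ (Yp K 0 0 h00)).1 = (ψ (Ym K 0 0 h00)).1 * (ψ (Ym K 0 0 h00)).1 := by
    apply smul_right_injective (Matrix (Fin n) (Fin n) K) h2
    show (2:K) • (ψ (Yp K 0 0 h00)).1
        = (2:K) • ((ψ (Ym K 0 0 h00)).1 * (ψ (Ym K 0 0 h00)).1)
    rw [e1']
    show _ * _ + _ * _ = _
    rw [two_smul]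
  have hPP : (ψ (Yp K 0 0 h00)).1 * (ψ (Yp K 0 0 h00)).1 = (ψ (Yp K 0 0 h00)).1 := by
    symm
    apply smul_right_injective (Matrix (Fin n) (Fin n) K) h2
    show (2:K) • (ψ (Yp K 0 0 h00)).1
        = (2:K) • ((ψ (Yp K 0 0 h00)).1 * (ψ (Yp K 0 0 h00)).1)
    rw [e2']
    show _ * _ + _ * _ = _
    rw [two_smul]
  have hPs : ∀ i j : Fin n, (j:ℕ) ≤ (i:ℕ) → (ψ (Yp K 0 0 h00)).1 i j = 0 := by
    intro i j hji
    rw [hPM]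
    exact strict_mul' (k := 0) (fun i j h => hMs i j (by omega)) hMs i j (by omega)
  have hP0 : (ψ (Yp K 0 0 h00)).1 = 0 := idem_strict_zero hPP hPs
  have hu00 : ψ (Yp K 0 0 h00) = 0 := Subtype.ext hP0
  have hzero : Yp K 0 0 h00 = 0 := by
    apply ψ.injective
    rw [hu00, map_zero]
  have hval : (Yp K 0 0 h00).1 p p = 1 := by
    rw [hu1, Matrix.add_apply, Matrix.single_apply_same,
        Matrix.single_apply_of_row_ne hpq.symm q p 1, add_zero]
  rw [hzero] at hval
  simp at hval
end
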